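/- Suppose ‖x_i‖_1 ≤ R for all i ∈ {1,…,n}, where R > 0, and that n = m·b for integers m ≥ 1 and b ≥ 1. Then for every subset B ⊆ {1,…,n} with |B| = b and all W, W' ∈ ℝ^{k×d}, the variance-reduced gradient estimator deviation satisfies ‖(1/b)∑_{i∈B} g_i(W) − (1/b)∑_{i∈B} g_i(W') + D(W') − D(W)‖_1 ≤ 2(m−1) R (exp(2R ‖W − W'‖_max) − 1) · G(W). -/

import Mathlib

open Finset Filter

/-- Softmax map on `ℝ^k`. -/
noncomputable def softmax {k : ℕ} (z : Fin k → ℝ) (c : Fin k) : ℝ :=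
  Real.exp (z c) / ∑ j, Real.exp (z j)

/-- Logits `W x` of a linear classifier `W : ℝ^{k×d}` on input `x : ℝ^d`. -/
noncomputable def logits {k d : ℕ} (W : Fin k → Fin d → ℝ) (x : Fin d → ℝ) : Fin k → ℝ :=
  fun c => ∑ j, W c j * x j

/-- Cross-entropy loss `L(W) = -(1/n) ∑ᵢ log S_{yᵢ}(W xᵢ)`. -/
noncomputable def lossCE {n k d : ℕ} (x : Fin n → Fin d → ℝ) (y : Fin n → Fin k)
    (W : Fin k → Fin d → ℝ) : ℝ :=
  -((1 : ℝ) / n) * ∑ i, Real.log (softmax (logits W (x i)) (y i))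

/-- Proxy function `G(W) = (1/n) ∑ᵢ (1 - S_{yᵢ}(W xᵢ))`. -/
noncomputable def proxyG {n k d : ℕ} (x : Fin n → Fin d → ℝ) (y : Fin n → Fin k)
    (W : Fin k → Fin d → ℝ) : ℝ :=
  ((1 : ℝ) / n) * ∑ i, (1 - softmax (logits W (x i)) (y i))

/-- Per-sample gradient matrix `gᵢ(W) = (S(W xᵢ) - e_{yᵢ}) xᵢᵀ`. -/
noncomputable def sampleGrad {k d : ℕ} (x : Fin d → ℝ) (y : Fin k)
    (W : Fin k → Fin d → ℝ) : Fin k → Fin d → ℝ :=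
  fun c j => (softmax (logits W x) c - (if c = y then 1 else 0)) * x j

/-- Full gradient matrix `D(W) = (1/n) ∑ᵢ gᵢ(W)`. -/
noncomputable def gradCE {n k d : ℕ} (x : Fin n → Fin d → ℝ) (y : Fin n → Fin k)
    (W : Fin k → Fin d → ℝ) : Fin k → Fin d → ℝ :=
  fun c j => ((1 : ℝ) / n) * ∑ i, sampleGrad (x i) (y i) W c j

/-- Entry-wise 1-norm of a matrix. -/
noncomputable def norm1M {k d : ℕ} (A : Fin k → Fin d → ℝ) : ℝ :=
  ∑ c, ∑ j, |A c j|

/-- 1-norm of a vector. -/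
noncomputable def norm1V {d : ℕ} (v : Fin d → ℝ) : ℝ := ∑ j, |v j|

/-- `min_{c ≠ y} (e_y - e_c)ᵀ A x`. -/
noncomputable def marginMin {k d : ℕ} (hk : 2 ≤ k) (A : Fin k → Fin d → ℝ)
    (x : Fin d → ℝ) (y : Fin k) : ℝ :=
  (Finset.univ.erase y).inf'
    (by
      obtain ⟨cne, hcne⟩ := Fintype.exists_ne_of_one_lt_card
        (by simpa using (by omega : 1 < k)) y
      exact ⟨cne, Finset.mem_erase.mpr ⟨hcne, Finset.mem_univ _⟩⟩)
    (fun c => logits A x y - logits A x c)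

/-- `min_{i ∈ [n], c ≠ yᵢ} (e_{yᵢ} - e_c)ᵀ W xᵢ`. -/
noncomputable def dataMargin {n k d : ℕ} (hn : 1 ≤ n) (hk : 2 ≤ k)
    (x : Fin n → Fin d → ℝ) (y : Fin n → Fin k) (W : Fin k → Fin d → ℝ) : ℝ :=
  Finset.univ.inf' ⟨⟨0, by omega⟩, Finset.mem_univ _⟩
    (fun i => marginMin hk W (x i) (y i))

/-- Max margin `γ` over the max-norm unit ball. -/
noncomputable def gammaMax {n k d : ℕ} (hn : 1 ≤ n) (hk : 2 ≤ k)
    (x : Fin n → Fin d → ℝ) (y : Fin n → Fin k) : ℝ :=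
  sSup { g : ℝ | ∃ W' : Fin k → Fin d → ℝ, ‖W'‖ ≤ 1 ∧ g = dataMargin hn hk x y W' }

/-- Mini-batch gradient `(1/b) ∑_{i ∈ B} gᵢ(W)`. -/
noncomputable def batchGrad {n k d : ℕ} (x : Fin n → Fin d → ℝ) (y : Fin n → Fin k)
    (B : Finset (Fin n)) (b : ℕ) (W : Fin k → Fin d → ℝ) : Fin k → Fin d → ℝ :=
  fun c j => ((1 : ℝ) / b) * ∑ i ∈ B, sampleGrad (x i) (y i) W c j

/-- Frobenius norm of a matrix. -/
noncomputable def frobNorm {k d : ℕ} (A : Fin k → Fin d → ℝ) : ℝ :=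
  Real.sqrt (∑ c, ∑ j, (A c j) ^ 2)
section VRAux

variable {k d : ℕ}

lemma sum_exp_pos (hk : 0 < k) (z : Fin k → ℝ) : 0 < ∑ j, Real.exp (z j) :=
  Finset.sum_pos (fun j _ => Real.exp_pos _) ⟨⟨0, hk⟩, Finset.mem_univ _⟩

lemma softmax_nonneg (hk : 0 < k) (z : Fin k → ℝ) (c : Fin k) : 0 ≤ softmax z c :=
  div_nonneg (Real.exp_pos _).le (sum_exp_pos hk z).le

lemma softmax_sum_one (hk : 0 < k) (z : Fin k → ℝ) : ∑ c, softmax z c = 1 := by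
  unfold softmax
  rw [← Finset.sum_div, div_self (sum_exp_pos hk z).ne']

lemma softmax_le_one (hk : 0 < k) (z : Fin k → ℝ) (c : Fin k) : softmax z c ≤ 1 := by
  have h := softmax_sum_one hk z
  have := Finset.single_le_sum (f := softmax z) (fun j _ => softmax_nonneg hk z j)
    (Finset.mem_univ c)
  linarith

lemma softmax_ratio (hk : 0 < k) (z z' : Fin k → ℝ) (δ : ℝ)
    (hδ : ∀ c, |z' c - z c| ≤ δ) (c : Fin k) :
    softmax z' c ≤ Real.exp (2 * δ) * softmax z c := by
  have hnum : Real.exp (z' c) ≤ Real.exp δ * Real.exp (z c) := by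
    rw [← Real.exp_add]
    exact Real.exp_le_exp.2 (by have := (abs_le.1 (hδ c)).2; linarith)
  have hden : Real.exp (-δ) * ∑ j, Real.exp (z j) ≤ ∑ j, Real.exp (z' j) := by
    rw [Finset.mul_sum]
    refine Finset.sum_le_sum fun j _ => ?_
    rw [← Real.exp_add]
    exact Real.exp_le_exp.2 (by have := (abs_le.1 (hδ j)).1; linarith)
  have hSpos := sum_exp_pos hk z
  have h1 : softmax z' c ≤
      (Real.exp δ * Real.exp (z c)) / (Real.exp (-δ) * ∑ j, Real.exp (z j)) :=
    div_le_div₀ (by positivity) hnum (by positivity) hden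
  calc softmax z' c ≤ _ := h1
    _ = Real.exp (2 * δ) * softmax z c := by
        unfold softmax
        rw [mul_div_mul_comm, ← Real.exp_sub, show δ - -δ = 2 * δ by ring]

lemma softmax_abs_diff (hk : 0 < k) (z z' : Fin k → ℝ) (δ : ℝ)
    (hδ : ∀ c, |z' c - z c| ≤ δ) (c : Fin k) :
    |softmax z' c - softmax z c| ≤ (Real.exp (2 * δ) - 1) * softmax z c := by
  have h1 := softmax_ratio hk z z' δ hδ c
  have h2 := softmax_ratio hk z' z δ (fun c => by rw [abs_sub_comm]; exact hδ c) c
  have hS := softmax_nonneg hk z c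
  have hS' := softmax_nonneg hk z' c
  have he1 := Real.add_one_le_exp (2 * δ)
  have he2 := Real.add_one_le_exp (-(2 * δ))
  have hprod : Real.exp (-(2 * δ)) * Real.exp (2 * δ) = 1 := by
    rw [← Real.exp_add]; simp
  have hEpos := Real.exp_pos (2 * δ)
  have hE'pos := Real.exp_pos (-(2 * δ))
  have h3 := mul_le_mul_of_nonneg_left h2 hE'pos.le
  rw [abs_sub_le_iff]
  constructor
  · nlinarith
  · nlinarith

lemma softmax_l1_diff (hk : 0 < k) (z z' : Fin k → ℝ) (y : Fin k) (δ : ℝ)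
    (hδ : ∀ c, |z' c - z c| ≤ δ) :
    ∑ c, |softmax z' c - softmax z c|
      ≤ 2 * (Real.exp (2 * δ) - 1) * (1 - softmax z y) := by
  have hsum : ∑ c, (softmax z' c - softmax z c) = 0 := by
    rw [Finset.sum_sub_distrib, softmax_sum_one hk, softmax_sum_one hk]; ring
  have hsplit := Finset.add_sum_erase Finset.univ
      (fun c => softmax z' c - softmax z c) (Finset.mem_univ y)
  have hy : |softmax z' y - softmax z y|
      ≤ ∑ c ∈ Finset.univ.erase y, |softmax z' c - softmax z c| := by
    have heq : softmax z' y - softmax z y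
        = -∑ c ∈ Finset.univ.erase y, (softmax z' c - softmax z c) := by
      linarith [hsplit.symm ▸ hsum]
    rw [heq, abs_neg]
    exact Finset.abs_sum_le_sum_abs _ _
  have herase : ∑ c ∈ Finset.univ.erase y, |softmax z' c - softmax z c|
      ≤ (Real.exp (2 * δ) - 1) * (1 - softmax z y) := by
    have h1 : ∑ c ∈ Finset.univ.erase y, |softmax z' c - softmax z c|
        ≤ ∑ c ∈ Finset.univ.erase y, (Real.exp (2 * δ) - 1) * softmax z c :=
      Finset.sum_le_sum fun c _ => softmax_abs_diff hk z z' δ hδ c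
    have hsplit2 := Finset.add_sum_erase Finset.univ (softmax z) (Finset.mem_univ y)
    have hone := softmax_sum_one hk z
    have h2 : ∑ c ∈ Finset.univ.erase y, softmax z c = 1 - softmax z y := by
      linarith [hsplit2.symm ▸ hone]
    rw [← Finset.mul_sum, h2] at h1
    exact h1
  have hsplitabs := Finset.add_sum_erase Finset.univ
      (fun c => |softmax z' c - softmax z c|) (Finset.mem_univ y)
  rw [← hsplitabs]
  linarith

lemma sampleGrad_diff_l1 (hk : 0 < k) (xv : Fin d → ℝ) (yv : Fin k)
    (W W' : Fin k → Fin d → ℝ) (R : ℝ) (hR : 0 ≤ R) (hx : norm1V xv ≤ R) :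
    ∑ c, ∑ j, |sampleGrad xv yv W c j - sampleGrad xv yv W' c j|
      ≤ 2 * R * (Real.exp (2 * R * ‖W - W'‖) - 1)
        * (1 - softmax (logits W xv) yv) := by
  set z := logits W xv
  set z' := logits W' xv
  have hxnn : 0 ≤ norm1V xv := Finset.sum_nonneg fun j _ => abs_nonneg _
  have hδ : ∀ c, |z' c - z c| ≤ R * ‖W - W'‖ := by
    intro c
    have h1 : z' c - z c = ∑ j, (W' c j - W c j) * xv j := by
      simp only [z, z', logits, ← Finset.sum_sub_distrib]
      exact Finset.sum_congr rfl fun j _ => by ring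
    rw [h1]
    calc |∑ j, (W' c j - W c j) * xv j| ≤ ∑ j, |(W' c j - W c j) * xv j| :=
          Finset.abs_sum_le_sum_abs _ _
      _ ≤ ∑ j, ‖W - W'‖ * |xv j| := by
          refine Finset.sum_le_sum fun j _ => ?_
          rw [abs_mul]
          refine mul_le_mul_of_nonneg_right ?_ (abs_nonneg _)
          have e1 : W' c j - W c j = -((W - W') c j) := by simp
          rw [e1, abs_neg]
          calc |(W - W') c j| = ‖(W - W') c j‖ := (Real.norm_eq_abs _).symm
            _ ≤ ‖(W - W') c‖ := norm_le_pi_norm ((W - W') c) j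
            _ ≤ ‖W - W'‖ := norm_le_pi_norm (W - W') c
      _ = ‖W - W'‖ * norm1V xv := by rw [← Finset.mul_sum]; rfl
      _ ≤ ‖W - W'‖ * R := mul_le_mul_of_nonneg_left hx (norm_nonneg _)
      _ = R * ‖W - W'‖ := mul_comm _ _
  have hsoft := softmax_l1_diff hk z z' yv (R * ‖W - W'‖) hδ
  have hsy : 1 - softmax z yv ≥ 0 := by linarith [softmax_le_one hk z yv]
  have hexp1 : (1 : ℝ) ≤ Real.exp (2 * (R * ‖W - W'‖)) :=
    Real.one_le_exp (by positivity)
  have hmain : ∑ c, ∑ j, |sampleGrad xv yv W c j - sampleGrad xv yv W' c j|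
      = (∑ c, |softmax z c - softmax z' c|) * norm1V xv := by
    rw [Finset.sum_mul]
    refine Finset.sum_congr rfl fun c _ => ?_
    have hterm : ∀ j, sampleGrad xv yv W c j - sampleGrad xv yv W' c j
        = (softmax z c - softmax z' c) * xv j := by
      intro j; simp only [sampleGrad, z, z']; ring
    simp only [hterm, abs_mul, ← Finset.mul_sum]
    rfl
  rw [hmain]
  have habs : ∑ c, |softmax z c - softmax z' c|
      ≤ 2 * (Real.exp (2 * (R * ‖W - W'‖)) - 1) * (1 - softmax z yv) := by
    calc ∑ c, |softmax z c - softmax z' c| = ∑ c, |softmax z' c - softmax z c| := by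
          refine Finset.sum_congr rfl fun c _ => ?_; rw [abs_sub_comm]
      _ ≤ _ := hsoft
  have hargeq : 2 * (R * ‖W - W'‖) = 2 * R * ‖W - W'‖ := by ring
  rw [hargeq] at habs hexp1
  have hsumnn : 0 ≤ ∑ c, |softmax z c - softmax z' c| :=
    Finset.sum_nonneg fun c _ => abs_nonneg _
  nlinarith

end VRAux

/-- deviation bound for the variance-reduced gradient estimator:
`‖(1/b)∑_{i∈B} gᵢ(W) − (1/b)∑_{i∈B} gᵢ(W') + D(W') − D(W)‖₁
  ≤ 2(m−1)R (exp(2R‖W − W'‖_max) − 1) G(W)`. -/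
theorem variance_reduced_deviation_bound (n k d : ℕ)
    (hn : 1 ≤ n) (hk : 2 ≤ k) (hd : 1 ≤ d)
    (x : Fin n → Fin d → ℝ) (y : Fin n → Fin k)
    (R : ℝ) (hR : 0 < R) (hx : ∀ i, norm1V (x i) ≤ R)
    (m b : ℕ) (hm : 1 ≤ m) (hb : 1 ≤ b) (hnb : n = m * b)
    (B : Finset (Fin n)) (hB : B.card = b)
    (W W' : Fin k → Fin d → ℝ) :
    norm1M (batchGrad x y B b W - batchGrad x y B b W' + gradCE x y W' - gradCE x y W)
      ≤ 2 * ((m : ℝ) - 1) * R * (Real.exp (2 * R * ‖W - W'‖) - 1) * proxyG x y W := by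
  have hk0 : 0 < k := by omega
  have hexp1 : (1 : ℝ) ≤ Real.exp (2 * R * ‖W - W'‖) :=
    Real.one_le_exp (by positivity)
  -- per-sample difference
  set h : Fin n → Fin k → Fin d → ℝ := fun i c j =>
    sampleGrad (x i) (y i) W c j - sampleGrad (x i) (y i) W' c j with hh
  set s : Fin n → ℝ := fun i => 1 - softmax (logits W (x i)) (y i) with hs
  set C : ℝ := 2 * R * (Real.exp (2 * R * ‖W - W'‖) - 1) with hC
  have hCnn : 0 ≤ C := by
    have : 0 ≤ Real.exp (2 * R * ‖W - W'‖) - 1 := by linarith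
    positivity
  have hsnn : ∀ i, 0 ≤ s i := fun i => by
    have := softmax_le_one hk0 (logits W (x i)) (y i); simp only [hs]; linarith
  have hper : ∀ i, ∑ c, ∑ j, |h i c j| ≤ C * s i := fun i =>
    sampleGrad_diff_l1 hk0 (x i) (y i) W W' R hR.le (hx i)
  have hG : proxyG x y W = (1 / (n : ℝ)) * ∑ i, s i := rfl
  rcases eq_or_lt_of_le hm with h1 | h2
  · -- m = 1 : the deviation is identically zero
    have hnb' : n = b := by rw [hnb, ← h1, one_mul]
    have hBu : B = Finset.univ :=
      Finset.eq_univ_of_card B (by rw [hB, Fintype.card_fin, hnb'])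
    have hcast : (n : ℝ) = (b : ℝ) := by rw [hnb']
    have hzero : (batchGrad x y B b W - batchGrad x y B b W' + gradCE x y W'
        - gradCE x y W) = fun _ _ => (0 : ℝ) := by
      funext c j
      simp only [Pi.add_apply, Pi.sub_apply, batchGrad, gradCE, hBu, hcast]
      ring
    have hm1 : ((m : ℝ) - 1) = 0 := by rw [← h1]; norm_num
    rw [hzero, hm1]
    simp [norm1M]
  · -- m ≥ 2
    have hm2 : 2 ≤ m := h2
    have hbpos : (0 : ℝ) < (b : ℝ) := by exact_mod_cast hb
    have hnpos : (0 : ℝ) < (n : ℝ) := by exact_mod_cast hn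
    have hmR : (2 : ℝ) ≤ (m : ℝ) := by exact_mod_cast hm2
    have hncast : (n : ℝ) = (m : ℝ) * (b : ℝ) := by rw [hnb, Nat.cast_mul]
    have hcoef : 1 / (b : ℝ) - 1 / (n : ℝ) = ((m : ℝ) - 1) / (n : ℝ) := by
      rw [hncast]; field_simp
    have hcoef2 : 1 / (n : ℝ) ≤ ((m : ℝ) - 1) / (n : ℝ) := by
      gcongr
      linarith
    have hBsub : B ⊆ Finset.univ := Finset.subset_univ B
    -- pointwise bound on each matrix entry
    have hpt : ∀ c j, |(batchGrad x y B b W - batchGrad x y B b W' + gradCE x y W'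
        - gradCE x y W) c j| ≤ ((m : ℝ) - 1) / (n : ℝ) * ∑ i, |h i c j| := by
      intro c j
      have hA : (batchGrad x y B b W - batchGrad x y B b W' + gradCE x y W'
          - gradCE x y W) c j
          = (1 / (b : ℝ) - 1 / (n : ℝ)) * (∑ i ∈ B, h i c j)
            - (1 / (n : ℝ)) * (∑ i ∈ Finset.univ \ B, h i c j) := by
        have hsd : (∑ i ∈ Finset.univ \ B, h i c j) + ∑ i ∈ B, h i c j
            = ∑ i, h i c j := Finset.sum_sdiff hBsub
        simp only [Pi.add_apply, Pi.sub_apply, batchGrad, gradCE, hh,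
          Finset.sum_sub_distrib]
        have : (∑ i, h i c j) = (∑ i ∈ Finset.univ \ B, h i c j)
            + ∑ i ∈ B, h i c j := hsd.symm
        simp only [hh, Finset.sum_sub_distrib] at this
        linear_combination (-(1 / (n : ℝ))) * this
      rw [hA]
      have hB1 : |∑ i ∈ B, h i c j| ≤ ∑ i ∈ B, |h i c j| :=
        Finset.abs_sum_le_sum_abs _ _
      have hB2 : |∑ i ∈ Finset.univ \ B, h i c j|
          ≤ ∑ i ∈ Finset.univ \ B, |h i c j| := Finset.abs_sum_le_sum_abs _ _
      have hsplit : (∑ i ∈ Finset.univ \ B, |h i c j|) + ∑ i ∈ B, |h i c j|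
          = ∑ i, |h i c j| := Finset.sum_sdiff hBsub
      have hc1 : (0 : ℝ) ≤ 1 / (b : ℝ) - 1 / (n : ℝ) := by
        rw [hcoef]; exact div_nonneg (by linarith) hnpos.le
      calc |(1 / (b : ℝ) - 1 / (n : ℝ)) * (∑ i ∈ B, h i c j)
            - (1 / (n : ℝ)) * (∑ i ∈ Finset.univ \ B, h i c j)|
          ≤ |(1 / (b : ℝ) - 1 / (n : ℝ)) * (∑ i ∈ B, h i c j)|
            + |(1 / (n : ℝ)) * (∑ i ∈ Finset.univ \ B, h i c j)| := abs_sub _ _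
        _ = (1 / (b : ℝ) - 1 / (n : ℝ)) * |∑ i ∈ B, h i c j|
            + (1 / (n : ℝ)) * |∑ i ∈ Finset.univ \ B, h i c j| := by
            rw [abs_mul, abs_mul, abs_of_nonneg hc1,
              abs_of_nonneg (by positivity : (0:ℝ) ≤ 1 / (n : ℝ))]
        _ ≤ ((m : ℝ) - 1) / (n : ℝ) * (∑ i ∈ B, |h i c j|)
            + ((m : ℝ) - 1) / (n : ℝ) * (∑ i ∈ Finset.univ \ B, |h i c j|) := by
            rw [hcoef]
            have hp1 : (0:ℝ) ≤ ((m : ℝ) - 1) / (n : ℝ) :=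
              div_nonneg (by linarith) hnpos.le
            have t1 := mul_le_mul_of_nonneg_left hB1 hp1
            have t2 : (1 / (n : ℝ)) * |∑ i ∈ Finset.univ \ B, h i c j|
                ≤ ((m : ℝ) - 1) / (n : ℝ) * ∑ i ∈ Finset.univ \ B, |h i c j| := by
              calc (1 / (n : ℝ)) * |∑ i ∈ Finset.univ \ B, h i c j|
                  ≤ (1 / (n : ℝ)) * ∑ i ∈ Finset.univ \ B, |h i c j| :=
                    mul_le_mul_of_nonneg_left hB2 (by positivity)
                _ ≤ ((m : ℝ) - 1) / (n : ℝ) * ∑ i ∈ Finset.univ \ B, |h i c j| :=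
                    mul_le_mul_of_nonneg_right hcoef2
                      (Finset.sum_nonneg fun i _ => abs_nonneg _)
            linarith
        _ = ((m : ℝ) - 1) / (n : ℝ) * ∑ i, |h i c j| := by
            rw [← mul_add]
            congr 1
            linarith [hsplit]
    -- sum the pointwise bound
    have hsum1 : norm1M (batchGrad x y B b W - batchGrad x y B b W' + gradCE x y W'
        - gradCE x y W) ≤ ((m : ℝ) - 1) / (n : ℝ) * ∑ i, ∑ c, ∑ j, |h i c j| := by
      unfold norm1M
      calc (∑ c, ∑ j, |(batchGrad x y B b W - batchGrad x y B b W' + gradCE x y W'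
            - gradCE x y W) c j|)
          ≤ ∑ c, ∑ j, ((m : ℝ) - 1) / (n : ℝ) * ∑ i, |h i c j| :=
            Finset.sum_le_sum fun c _ => Finset.sum_le_sum fun j _ => hpt c j
        _ = ((m : ℝ) - 1) / (n : ℝ) * ∑ i, ∑ c, ∑ j, |h i c j| := by
            simp only [← Finset.mul_sum]
            congr 1
            calc ∑ c : Fin k, ∑ j : Fin d, ∑ i : Fin n, |h i c j|
                = ∑ c : Fin k, ∑ i : Fin n, ∑ j : Fin d, |h i c j| :=
                  Finset.sum_congr rfl fun c _ => Finset.sum_comm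
              _ = ∑ i, ∑ c, ∑ j, |h i c j| := Finset.sum_comm
    have hsum2 : ∑ i, ∑ c, ∑ j, |h i c j| ≤ C * ∑ i, s i := by
      rw [Finset.mul_sum]
      exact Finset.sum_le_sum fun i _ => hper i
    have hfin : ((m : ℝ) - 1) / (n : ℝ) * ∑ i, ∑ c, ∑ j, |h i c j|
        ≤ ((m : ℝ) - 1) / (n : ℝ) * (C * ∑ i, s i) := by
      exact mul_le_mul_of_nonneg_left hsum2 (div_nonneg (by linarith) hnpos.le)
    have hrw : ((m : ℝ) - 1) / (n : ℝ) * (C * ∑ i, s i)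
        = 2 * ((m : ℝ) - 1) * R * (Real.exp (2 * R * ‖W - W'‖) - 1)
          * proxyG x y W := by
      rw [hG, hC]; field_simp
    linarith [hsum1, hfin, hrw ▸ hfin]
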